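/- For all real intervals J₁ and J₂ with J₁ ∩ J₂ = ∅, the operators on the Fock space 𝓕 satisfy E_{J₁} ∘ F_{J₂} = F_{J₂} ∘ E_{J₁} as K-linear endomorphisms of 𝓕. -/

import Mathlib

noncomputable section
open Function
open scoped Classical

/-- The `ℕ`-valued indicator function of the interval `[a, b)`. -/
def ind (a b : ℝ) : ℝ → ℕ := (Set.Ico a b).indicator fun _ => 1

/-- A real pyramid: a function `p : ℝ → ℕ` vanishing outside a bounded set, maximal at `0`,
nondecreasing on `(-∞, 0]`, nonincreasing on `[0, ∞)`, right-continuous and piecewise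
constant with finitely many discontinuities, and with jumps of size at most 1
(`p₋(x)` is the left limit of `p` at `x`). -/
def IsRealPyramid (p : ℝ → ℕ) : Prop :=
  (∃ M : ℝ, ∀ x : ℝ, M ≤ |x| → p x = 0) ∧
  (∀ x, p x ≤ p 0) ∧
  (∀ ⦃x y : ℝ⦄, x ≤ y → y ≤ 0 → p x ≤ p y) ∧
  (∀ ⦃x y : ℝ⦄, 0 ≤ x → x ≤ y → p y ≤ p x) ∧
  (∀ x, ContinuousWithinAt p (Set.Ici x) x) ∧
  {x : ℝ | ¬ ContinuousAt p x}.Finite ∧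
  (∀ x, |(p x : ℤ) - ((Function.leftLim p x : ℕ) : ℤ)| ≤ 1)

/-- The interval `[a, b)` is addable for `p` if `p + 1_{[a,b)}` is again a real pyramid. -/
def Addable (p : ℝ → ℕ) (a b : ℝ) : Prop := IsRealPyramid (fun x => p x + ind a b x)

/-- The interval `[a, b)` is removable for `p` if `p ≥ 1` on `[a, b)` and `p − 1_{[a,b)}`
is again a real pyramid. -/
def Removable (p : ℝ → ℕ) (a b : ℝ) : Prop :=
  (∀ x ∈ Set.Ico a b, 1 ≤ p x) ∧ IsRealPyramid (fun x => p x - ind a b x)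

/-- `n_J(p)`: `1` if `J = [a,b)` is addable for `p`, `−1` if removable, `0` otherwise. -/
def nJ (p : ℝ → ℕ) (a b : ℝ) : ℤ :=
  if Addable p a b then 1 else if Removable p a b then -1 else 0

/-- The base field `K = ℚ(t)`. -/
abbrev K : Type := RatFunc ℚ

/-- The variable `t ∈ K` (playing the role of `υ^{1/2}`). -/
def tK : K := RatFunc.X

/-- The quantum parameter `v := t²`. -/
def vK : K := tK ^ 2

/-- The type of real pyramids. -/
def Pyr : Type := {p : ℝ → ℕ // IsRealPyramid p}

/-- The Fock space: the `K`-vector space with basis `|p⟩` indexed by real pyramids. -/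
abbrev Fock : Type := Pyr →₀ K

/-- `E_J |p⟩ = −t·(−v)^{p(b)−p(a)} |p − 1_J⟩` if `J = [a,b)` is removable for `p`,
and `0` otherwise. -/
def Evec (a b : ℝ) (p : Pyr) : Fock :=
  if h : Removable p.1 a b then
    Finsupp.single ⟨fun x => p.1 x - ind a b x, h.2⟩
      (-tK * (-vK) ^ ((p.1 b : ℤ) - (p.1 a : ℤ)))
  else 0

/-- `F_J |p⟩ = t·(−v)^{p(a)−p(b)} |p + 1_J⟩` if `J = [a,b)` is addable for `p`,
and `0` otherwise. -/
def Fvec (a b : ℝ) (p : Pyr) : Fock :=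
  if h : Addable p.1 a b then
    Finsupp.single ⟨fun x => p.1 x + ind a b x, h⟩
      (tK * (-vK) ^ ((p.1 a : ℤ) - (p.1 b : ℤ)))
  else 0

/-- The `K`-linear operator `E_J` on the Fock space. -/
def Eop (a b : ℝ) : Fock →ₗ[K] Fock :=
  Finsupp.lsum K fun p => LinearMap.toSpanSingleton K Fock (Evec a b p)

/-- The `K`-linear operator `F_J` on the Fock space. -/
def Fop (a b : ℝ) : Fock →ₗ[K] Fock :=
  Finsupp.lsum K fun p => LinearMap.toSpanSingleton K Fock (Fvec a b p)

/-- The `K`-linear operator `K_J` on the Fock space: `K_J |p⟩ = v^{n_J(p)} |p⟩`. -/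
def Kop (a b : ℝ) : Fock →ₗ[K] Fock :=
  Finsupp.lsum K fun p =>
    LinearMap.toSpanSingleton K Fock (Finsupp.single p (vK ^ (nJ p.1 a b)))

/-- The `K`-linear operator `K_J⁻¹` on the Fock space: `K_J⁻¹ |p⟩ = v^{−n_J(p)} |p⟩`. -/
def Kinvop (a b : ℝ) : Fock →ₗ[K] Fock :=
  Finsupp.lsum K fun p =>
    LinearMap.toSpanSingleton K Fock (Finsupp.single p (vK ^ (-nJ p.1 a b)))


-- ### auxiliary lemmas ###
-- ## basic indicator lemmas
lemma ind_def (a b x : ℝ) : ind a b x = if a ≤ x ∧ x < b then 1 else 0 := by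
  simp [ind, Set.indicator_apply, Set.mem_Ico]

/-- left-limit version of the indicator of `[a,b)` : indicator of `(a,b]`. -/
def jnd (a b x : ℝ) : ℕ := if a < x ∧ x ≤ b then 1 else 0

lemma ind_le_one (a b x : ℝ) : ind a b x ≤ 1 := by
  rw [ind_def]; split <;> simp

lemma jnd_le_one (a b x : ℝ) : jnd a b x ≤ 1 := by
  rw [jnd]; split <;> simp

lemma ind_eq_zero_left {a b x : ℝ} (h : x < a) : ind a b x = 0 := by
  rw [ind_def, if_neg]; exact fun hc => absurd hc.1 (not_le.mpr h)

lemma ind_eq_zero_right {a b x : ℝ} (h : b ≤ x) : ind a b x = 0 := by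
  rw [ind_def, if_neg]; exact fun hc => absurd hc.2 (not_lt.mpr h)

lemma ind_eq_one {a b x : ℝ} (h1 : a ≤ x) (h2 : x < b) : ind a b x = 1 := by
  rw [ind_def, if_pos ⟨h1, h2⟩]

lemma jnd_eq_zero_left {a b x : ℝ} (h : x ≤ a) : jnd a b x = 0 := by
  rw [jnd, if_neg]; exact fun hc => absurd hc.1 (not_lt.mpr h)

lemma jnd_eq_zero_right {a b x : ℝ} (h : b < x) : jnd a b x = 0 := by
  rw [jnd, if_neg]; exact fun hc => absurd hc.2 (not_le.mpr h)

lemma jnd_eq_one {a b x : ℝ} (h1 : a < x) (h2 : x ≤ b) : jnd a b x = 1 := by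
  rw [jnd, if_pos ⟨h1, h2⟩]

lemma ind_mem {a b x : ℝ} (h : ind a b x ≠ 0) : x ∈ Set.Ico a b := by
  rw [ind_def] at h
  split_ifs at h with hc
  · exact Set.mem_Ico.mpr hc
  · exact absurd rfl h

lemma ind_of_mem {a b x : ℝ} (h : x ∈ Set.Ico a b) : ind a b x = 1 := by
  rw [ind_def, if_pos (Set.mem_Ico.mp h)]

lemma jnd_mem {a b x : ℝ} (h : jnd a b x ≠ 0) : a < x ∧ x ≤ b := by
  rw [jnd] at h
  split_ifs at h with hc
  · exact hc
  · exact absurd rfl h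

lemma ind_eq_jnd {a b x : ℝ} (ha : x ≠ a) (hb : x ≠ b) : ind a b x = jnd a b x := by
  rw [ind_def, jnd]
  split_ifs with hc hd hd
  · rfl
  · exact absurd ⟨hc.1.lt_of_ne (Ne.symm ha), hc.2.le⟩ hd
  · exact absurd ⟨hd.1.le, hd.2.lt_of_ne hb⟩ hc
  · rfl

lemma ind_disj_point {a₁ b₁ a₂ b₂ : ℝ}
    (hdisj : Set.Ico a₁ b₁ ∩ Set.Ico a₂ b₂ = ∅) (x : ℝ) :
    ind a₁ b₁ x = 0 ∨ ind a₂ b₂ x = 0 := by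
  by_contra h
  push_neg at h
  exact Set.eq_empty_iff_forall_notMem.mp hdisj x ⟨ind_mem h.1, ind_mem h.2⟩

lemma ind_zero_on {a₁ b₁ a₂ b₂ : ℝ}
    (hdisj : Set.Ico a₁ b₁ ∩ Set.Ico a₂ b₂ = ∅) :
    ∀ x ∈ Set.Ico a₁ b₁, ind a₂ b₂ x = 0 := by
  intro x hx
  rcases ind_disj_point hdisj x with h | h
  · rw [ind_of_mem hx] at h; exact absurd h one_ne_zero
  · exact h

lemma fun_swap {p : ℝ → ℕ} {a₁ b₁ a₂ b₂ : ℝ}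
    (hdisj : Set.Ico a₁ b₁ ∩ Set.Ico a₂ b₂ = ∅) :
    (fun x => (p x - ind a₁ b₁ x) + ind a₂ b₂ x)
      = fun x => (p x + ind a₂ b₂ x) - ind a₁ b₁ x := by
  funext z
  have := ind_disj_point hdisj z
  omega

-- ## left limits
lemma leftLim_eq_of_eventually {g : ℝ → ℕ} {x : ℝ} {v : ℕ}
    (h : ∃ ε > 0, ∀ y, x - ε < y → y < x → g y = v) : Function.leftLim g x = v := by
  obtain ⟨ε, hε, hconst⟩ := h
  have hev : ∀ᶠ y in nhdsWithin x (Set.Iio x), g y = v := by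
    filter_upwards [Ioo_mem_nhdsLT_of_mem (a := x - ε) (c := x) (Set.mem_Ioc.mpr ⟨by linarith, le_refl x⟩)] with y hy
    exact hconst y hy.1 hy.2
  exact leftLim_eq_of_tendsto
    ((Filter.tendsto_congr' hev).mpr tendsto_const_nhds)

lemma exists_left_const {p : ℝ → ℕ} (hfin : {x : ℝ | ¬ ContinuousAt p x}.Finite) (x : ℝ) :
    ∃ ε > 0, ∀ y, x - ε < y → y < x → p y = Function.leftLim p x := by
  obtain ⟨c, hcx, hc⟩ : ∃ c, c < x ∧ ∀ y ∈ Set.Ioo c x, ContinuousAt p y := by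
    have hD : ({y : ℝ | ¬ ContinuousAt p y} ∩ Set.Ioo (x - 1) x).Finite :=
      hfin.inter_of_left _
    rcases Set.eq_empty_or_nonempty ({y : ℝ | ¬ ContinuousAt p y} ∩ Set.Ioo (x - 1) x)
      with hE | hNE
    · refine ⟨x - 1, by linarith, fun y hy => ?_⟩
      by_contra hcont
      exact Set.eq_empty_iff_forall_notMem.mp hE y ⟨hcont, hy⟩
    · have hFne : hD.toFinset.Nonempty := by
        rw [Set.Finite.toFinset_nonempty]; exact hNE
      have hcmem : hD.toFinset.max' hFne ∈
          {y : ℝ | ¬ ContinuousAt p y} ∩ Set.Ioo (x - 1) x :=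
        hD.mem_toFinset.mp (hD.toFinset.max'_mem hFne)
      refine ⟨hD.toFinset.max' hFne, hcmem.2.2, fun y hy => ?_⟩
      by_contra hcont
      have hyF : y ∈ hD.toFinset :=
        hD.mem_toFinset.mpr ⟨hcont, lt_trans hcmem.2.1 hy.1, hy.2⟩
      exact absurd (hD.toFinset.le_max' y hyF) (not_le.mpr hy.1)
  have hm : (c + x) / 2 ∈ Set.Ioo c x := ⟨by linarith, by linarith⟩
  have hconst : ∀ y ∈ Set.Ioo c x, p y = p ((c + x) / 2) := by
    intro y hy
    have himg : IsPreconnected (p '' Set.Ioo c x) :=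
      isPreconnected_Ioo.image p fun z hz => (hc z hz).continuousWithinAt
    exact himg.subsingleton ⟨y, hy, rfl⟩ ⟨_, hm, rfl⟩
  have hll : Function.leftLim p x = p ((c + x) / 2) :=
    leftLim_eq_of_eventually ⟨x - c, by linarith, fun y h1 h2 => hconst y ⟨by linarith, h2⟩⟩
  exact ⟨x - c, by linarith, fun y h1 h2 => by rw [hconst y ⟨by linarith, h2⟩, hll]⟩

lemma ind_left (a b x : ℝ) : ∃ ε > 0, ∀ y, x - ε < y → y < x → ind a b y = jnd a b x := by
  rcases le_or_gt x a with h | h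
  · refine ⟨1, one_pos, fun y h1 h2 => ?_⟩
    rw [ind_eq_zero_left (by linarith), jnd_eq_zero_left h]
  · rcases le_or_gt x b with h' | h'
    · refine ⟨x - a, by linarith, fun y h1 h2 => ?_⟩
      rw [ind_eq_one (by linarith) (by linarith), jnd_eq_one h h']
    · refine ⟨x - b, by linarith, fun y h1 h2 => ?_⟩
      rw [ind_eq_zero_right (by linarith), jnd_eq_zero_right h']

lemma leftLim_comb {p : ℝ → ℕ} (hfin : {x : ℝ | ¬ ContinuousAt p x}.Finite)
    (F : ℕ → ℕ → ℕ → ℕ) (a₁ b₁ a₂ b₂ x : ℝ) :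
    Function.leftLim (fun y => F (p y) (ind a₂ b₂ y) (ind a₁ b₁ y)) x
      = F (Function.leftLim p x) (jnd a₂ b₂ x) (jnd a₁ b₁ x) := by
  obtain ⟨ε₀, hε₀, h₀⟩ := exists_left_const hfin x
  obtain ⟨ε₁, hε₁, hι₁⟩ := ind_left a₁ b₁ x
  obtain ⟨ε₂, hε₂, hι₂⟩ := ind_left a₂ b₂ x
  apply leftLim_eq_of_eventually
  refine ⟨min ε₀ (min ε₁ ε₂), lt_min hε₀ (lt_min hε₁ hε₂), fun y hy1 hy2 => ?_⟩
  have l0 : x - ε₀ < y := by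
    have := min_le_left ε₀ (min ε₁ ε₂); linarith
  have l1 : x - ε₁ < y := by
    have := (min_le_right ε₀ (min ε₁ ε₂)).trans (min_le_left ε₁ ε₂); linarith
  have l2 : x - ε₂ < y := by
    have := (min_le_right ε₀ (min ε₁ ε₂)).trans (min_le_right ε₁ ε₂); linarith
  rw [h₀ y l0 hy2, hι₁ y l1 hy2, hι₂ y l2 hy2]

lemma leftLim_q {p : ℝ → ℕ} (hfin : {x : ℝ | ¬ ContinuousAt p x}.Finite)
    {a₁ b₁ a₂ b₂ x : ℝ} :
    Function.leftLim (fun y => (p y + ind a₂ b₂ y) - ind a₁ b₁ y) x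
      = (Function.leftLim p x + jnd a₂ b₂ x) - jnd a₁ b₁ x :=
  leftLim_comb hfin (fun n u v => (n + u) - v) a₁ b₁ a₂ b₂ x

lemma leftLim_r {p : ℝ → ℕ} (hfin : {x : ℝ | ¬ ContinuousAt p x}.Finite)
    {a₂ b₂ x : ℝ} :
    Function.leftLim (fun y => p y + ind a₂ b₂ y) x
      = Function.leftLim p x + jnd a₂ b₂ x :=
  leftLim_comb hfin (fun n u _ => n + u) a₂ b₂ a₂ b₂ x

lemma leftLim_s {p : ℝ → ℕ} (hfin : {x : ℝ | ¬ ContinuousAt p x}.Finite)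
    {a₁ b₁ x : ℝ} :
    Function.leftLim (fun y => p y - ind a₁ b₁ y) x
      = Function.leftLim p x - jnd a₁ b₁ x :=
  leftLim_comb hfin (fun n _ v => n - v) a₁ b₁ a₁ b₁ x

-- ## right continuity / continuity at non-endpoints
lemma ind_right (a b x : ℝ) : ∃ ε > 0, ∀ y, x ≤ y → y < x + ε → ind a b y = ind a b x := by
  rcases lt_or_ge x a with h | h
  · refine ⟨a - x, by linarith, fun y h1 h2 => ?_⟩
    rw [ind_eq_zero_left (by linarith), ind_eq_zero_left h]
  · rcases lt_or_ge x b with h' | h'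
    · refine ⟨b - x, by linarith, fun y h1 h2 => ?_⟩
      rw [ind_eq_one (by linarith) (by linarith), ind_eq_one h h']
    · refine ⟨1, one_pos, fun y h1 h2 => ?_⟩
      rw [ind_eq_zero_right (by linarith), ind_eq_zero_right h']

lemma cwa_comb {p : ℝ → ℕ} {x : ℝ} (hp : ContinuousWithinAt p (Set.Ici x) x)
    (F : ℕ → ℕ → ℕ → ℕ) (a₁ b₁ a₂ b₂ : ℝ) :
    ContinuousWithinAt (fun y => F (p y) (ind a₂ b₂ y) (ind a₁ b₁ y)) (Set.Ici x) x := by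
  obtain ⟨ε₁, hε₁, hι₁⟩ := ind_right a₁ b₁ x
  obtain ⟨ε₂, hε₂, hι₂⟩ := ind_right a₂ b₂ x
  have hevp : ∀ᶠ y in nhdsWithin x (Set.Ici x), p y = p x := by
    filter_upwards [hp ((isOpen_discrete {p x}).mem_nhds rfl)] with y hy using hy
  have hev : ∀ᶠ y in nhdsWithin x (Set.Ici x),
      (fun y => F (p y) (ind a₂ b₂ y) (ind a₁ b₁ y)) y
        = F (p x) (ind a₂ b₂ x) (ind a₁ b₁ x) := by
    filter_upwards [hevp,
      Ico_mem_nhdsGE_of_mem (c := x) (a := x + min ε₁ ε₂)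
        (Set.mem_Ico.mpr ⟨le_refl x, by have := lt_min hε₁ hε₂; linarith⟩)] with y hy hy2
    have l1 : y < x + ε₁ := by have := min_le_left ε₁ ε₂; have := hy2.2; linarith
    have l2 : y < x + ε₂ := by have := min_le_right ε₁ ε₂; have := hy2.2; linarith
    rw [hy, hι₁ y hy2.1 l1, hι₂ y hy2.1 l2]
  exact Filter.Tendsto.congr' (hev.mono fun y hy => hy.symm) tendsto_const_nhds

lemma ind_eventually_eq {a b x : ℝ} (ha : x ≠ a) (hb : x ≠ b) :
    ∀ᶠ y in nhds x, ind a b y = ind a b x := by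
  rcases lt_trichotomy x a with h | h | h
  · filter_upwards [Iio_mem_nhds h] with y hy
    rw [ind_eq_zero_left hy, ind_eq_zero_left h]
  · exact absurd h ha
  · rcases lt_trichotomy x b with h' | h' | h'
    · filter_upwards [Ioo_mem_nhds h h'] with y hy
      rw [ind_eq_one hy.1.le hy.2, ind_eq_one h.le h']
    · exact absurd h' hb
    · filter_upwards [Ioi_mem_nhds h'] with y hy
      rw [ind_eq_zero_right (le_of_lt hy), ind_eq_zero_right h'.le]

lemma contAt_comb {p : ℝ → ℕ} {x : ℝ} (hp : ContinuousAt p x) (F : ℕ → ℕ → ℕ → ℕ)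
    {a₁ b₁ a₂ b₂ : ℝ} (h1 : x ≠ a₁) (h2 : x ≠ b₁) (h3 : x ≠ a₂) (h4 : x ≠ b₂) :
    ContinuousAt (fun y => F (p y) (ind a₂ b₂ y) (ind a₁ b₁ y)) x := by
  have hevp : ∀ᶠ y in nhds x, p y = p x := by
    filter_upwards [hp ((isOpen_discrete {p x}).mem_nhds rfl)] with y hy using hy
  have hev : ∀ᶠ y in nhds x, (fun y => F (p y) (ind a₂ b₂ y) (ind a₁ b₁ y)) y
      = F (p x) (ind a₂ b₂ x) (ind a₁ b₁ x) := by
    filter_upwards [hevp, ind_eventually_eq h1 h2, ind_eventually_eq h3 h4] with y hy hy1 hy2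
    rw [hy, hy1, hy2]
  exact Filter.Tendsto.congr' (hev.mono fun y hy => hy.symm) tendsto_const_nhds

lemma fin_comb {p : ℝ → ℕ} (hfin : {x : ℝ | ¬ ContinuousAt p x}.Finite)
    (F : ℕ → ℕ → ℕ → ℕ) (a₁ b₁ a₂ b₂ : ℝ) :
    {x : ℝ | ¬ ContinuousAt (fun y => F (p y) (ind a₂ b₂ y) (ind a₁ b₁ y)) x}.Finite := by
  apply (hfin.union (Set.toFinite {a₁, b₁, a₂, b₂})).subset
  intro x hx
  simp only [Set.mem_union, Set.mem_setOf_eq, Set.mem_insert_iff, Set.mem_singleton_iff]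
  by_contra hcon
  push_neg at hcon
  obtain ⟨hc1, hc2, hc3, hc4, hc5⟩ := hcon
  exact hx (contAt_comb hc1 F hc2 hc3 hc4 hc5)

lemma ind_eq_zero_of_abs {a b x : ℝ} (h : max |a| |b| + 1 ≤ |x|) : ind a b x = 0 := by
  rw [ind_def, if_neg]
  rintro ⟨hax, hxb⟩
  rcases abs_cases x with h' | h' <;>
    [skip; skip] <;>
    · have h1 := le_abs_self b
      have h2 := neg_abs_le a
      have h3 := le_max_left |a| |b|
      have h4 := le_max_right |a| |b|
      linarith [h'.1]

lemma bdd_comb {p : ℝ → ℕ} (hM : ∃ M : ℝ, ∀ x : ℝ, M ≤ |x| → p x = 0)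
    (F : ℕ → ℕ → ℕ → ℕ) (hF : F 0 0 0 = 0) (a₁ b₁ a₂ b₂ : ℝ) :
    ∃ M : ℝ, ∀ x : ℝ, M ≤ |x| → F (p x) (ind a₂ b₂ x) (ind a₁ b₁ x) = 0 := by
  obtain ⟨M, hMp⟩ := hM
  refine ⟨max M (max (max |a₁| |b₁| + 1) (max |a₂| |b₂| + 1)), fun x hx => ?_⟩
  have hMx : M ≤ |x| := le_trans (le_max_left _ _) hx
  have h1 : max |a₁| |b₁| + 1 ≤ |x| :=
    le_trans (le_trans (le_max_left _ _) (le_max_right M _)) hx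
  have h2 : max |a₂| |b₂| + 1 ≤ |x| :=
    le_trans (le_trans (le_max_right _ _) (le_max_right M _)) hx
  rw [hMp x hMx, ind_eq_zero_of_abs h1, ind_eq_zero_of_abs h2, hF]

-- ## pyramid-level lemmas
lemma isRealPyramid_mk {f : ℝ → ℕ}
    (h1 : ∃ M : ℝ, ∀ x : ℝ, M ≤ |x| → f x = 0)
    (h3 : ∀ ⦃x y : ℝ⦄, x ≤ y → y ≤ 0 → f x ≤ f y)
    (h4 : ∀ ⦃x y : ℝ⦄, 0 ≤ x → x ≤ y → f y ≤ f x)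
    (h5 : ∀ x, ContinuousWithinAt f (Set.Ici x) x)
    (h6 : {x : ℝ | ¬ ContinuousAt f x}.Finite)
    (h7 : ∀ x, |(f x : ℤ) - ((Function.leftLim f x : ℕ) : ℤ)| ≤ 1) :
    IsRealPyramid f :=
  ⟨h1, fun x => (le_total x 0).elim (fun h => h3 h le_rfl) (fun h => h4 le_rfl h),
    h3, h4, h5, h6, h7⟩

lemma leftLim_le_of_le_zero {p : ℝ → ℕ} (hp : IsRealPyramid p) {x : ℝ} (hx : x ≤ 0) :
    Function.leftLim p x ≤ p x := by
  obtain ⟨ε, hε, hc⟩ := exists_left_const hp.2.2.2.2.2.1 x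
  rw [← hc (x - ε / 2) (by linarith) (by linarith)]
  exact hp.2.2.1 (by linarith) hx

lemma le_leftLim_of_pos {p : ℝ → ℕ} (hp : IsRealPyramid p) {x : ℝ} (hx : 0 < x) :
    p x ≤ Function.leftLim p x := by
  obtain ⟨ε, hε, hc⟩ := exists_left_const hp.2.2.2.2.2.1 x
  have hmax : max 0 (x - ε) < x := max_lt hx (by linarith)
  have h0 : (0:ℝ) ≤ max 0 (x - ε) := le_max_left _ _
  have hεm : x - ε ≤ max 0 (x - ε) := le_max_right _ _
  rw [← hc ((max 0 (x - ε) + x) / 2) (by linarith) (by linarith)]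
  exact hp.2.2.2.1 (by linarith) (by linarith)

lemma one_le_leftLim {p : ℝ → ℕ} (hfin : {x : ℝ | ¬ ContinuousAt p x}.Finite)
    {a₁ b₁ : ℝ} (hp1 : ∀ z ∈ Set.Ico a₁ b₁, 1 ≤ p z) {x : ℝ}
    (hax : a₁ < x) (hxb : x ≤ b₁) : 1 ≤ Function.leftLim p x := by
  obtain ⟨ε, hε, hc⟩ := exists_left_const hfin x
  have hmax : max a₁ (x - ε) < x := max_lt hax (by linarith)
  have h0 : a₁ ≤ max a₁ (x - ε) := le_max_left _ _
  have hεm : x - ε ≤ max a₁ (x - ε) := le_max_right _ _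
  rw [← hc ((max a₁ (x - ε) + x) / 2) (by linarith) (by linarith)]
  exact hp1 _ ⟨by linarith, by linarith⟩

-- ## the middle pyramids in the strictly separated case
lemma pyr_mid {p : ℝ → ℕ} {a₁ b₁ a₂ b₂ : ℝ} (h₁ : a₁ < b₁) (h₂ : a₂ < b₂)
    (hdisj : Set.Ico a₁ b₁ ∩ Set.Ico a₂ b₂ = ∅) (hsep : b₁ < a₂ ∨ b₂ < a₁)
    (hp : IsRealPyramid p) (hp1 : ∀ x ∈ Set.Ico a₁ b₁, 1 ≤ p x)
    (hq : IsRealPyramid fun x => (p x + ind a₂ b₂ x) - ind a₁ b₁ x) :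
    (IsRealPyramid fun x => p x + ind a₂ b₂ x) ∧
      (IsRealPyramid fun x => p x - ind a₁ b₁ x) := by
  have hdp := ind_disj_point hdisj
  have hfin := hp.2.2.2.2.2.1
  have p3 := hp.2.2.1
  have p4 := hp.2.2.2.1
  have p7 := hp.2.2.2.2.2.2
  have q3 : ∀ ⦃x y : ℝ⦄, x ≤ y → y ≤ 0 →
      (p x + ind a₂ b₂ x) - ind a₁ b₁ x ≤ (p y + ind a₂ b₂ y) - ind a₁ b₁ y := hq.2.2.1
  have q4 : ∀ ⦃x y : ℝ⦄, 0 ≤ x → x ≤ y →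
      (p y + ind a₂ b₂ y) - ind a₁ b₁ y ≤ (p x + ind a₂ b₂ x) - ind a₁ b₁ x := hq.2.2.2.1
  have q7 : ∀ x : ℝ, |(((p x + ind a₂ b₂ x) - ind a₁ b₁ x : ℕ) : ℤ) -
      (((Function.leftLim p x + jnd a₂ b₂ x) - jnd a₁ b₁ x : ℕ) : ℤ)| ≤ 1 := by
    intro x
    have h := hq.2.2.2.2.2.2 x
    rwa [leftLim_q hfin] at h
  have H1 : ∀ z, ind a₁ b₁ z = 0 ∨ (ind a₁ b₁ z = 1 ∧ 1 ≤ p z) := by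
    intro z
    rcases Nat.eq_zero_or_pos (ind a₁ b₁ z) with h | h
    · exact Or.inl h
    · have h1 : ind a₁ b₁ z = 1 := le_antisymm (ind_le_one _ _ _) h
      exact Or.inr ⟨h1, hp1 z (ind_mem (by omega))⟩
  have H2 : ∀ z, jnd a₁ b₁ z = 0 ∨ (jnd a₁ b₁ z = 1 ∧ 1 ≤ Function.leftLim p z) := by
    intro z
    rcases Nat.eq_zero_or_pos (jnd a₁ b₁ z) with h | h
    · exact Or.inl h
    · have h1 : jnd a₁ b₁ z = 1 := le_antisymm (jnd_le_one _ _ _) h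
      obtain ⟨hz1, hz2⟩ := jnd_mem (a := a₁) (b := b₁) (x := z) (by omega)
      exact Or.inr ⟨h1, one_le_leftLim hfin hp1 hz1 hz2⟩
  have fact1 : ∀ x, ind a₂ b₂ x = jnd a₂ b₂ x ∨ (ind a₁ b₁ x = 0 ∧ jnd a₁ b₁ x = 0) := by
    intro x
    by_cases hx : x = a₂ ∨ x = b₂
    · right
      rcases hsep with hs | hs
      · have hx' : b₁ < x := by rcases hx with rfl | rfl <;> linarith
        exact ⟨ind_eq_zero_right hx'.le, jnd_eq_zero_right hx'⟩
      · have hx' : x < a₁ := by rcases hx with rfl | rfl <;> linarith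
        exact ⟨ind_eq_zero_left hx', jnd_eq_zero_left hx'.le⟩
    · push_neg at hx
      exact Or.inl (ind_eq_jnd hx.1 hx.2)
  have fact2 : ∀ x, ind a₁ b₁ x = jnd a₁ b₁ x ∨ (ind a₂ b₂ x = 0 ∧ jnd a₂ b₂ x = 0) := by
    intro x
    by_cases hx : x = a₁ ∨ x = b₁
    · right
      rcases hsep with hs | hs
      · have hx' : x < a₂ := by rcases hx with rfl | rfl <;> linarith
        exact ⟨ind_eq_zero_left hx', jnd_eq_zero_left hx'.le⟩
      · have hx' : b₂ < x := by rcases hx with rfl | rfl <;> linarith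
        exact ⟨ind_eq_zero_right hx'.le, jnd_eq_zero_right hx'⟩
    · push_neg at hx
      exact Or.inl (ind_eq_jnd hx.1 hx.2)
  constructor
  · refine isRealPyramid_mk ?_ ?_ ?_ ?_ ?_ ?_
    · exact bdd_comb hp.1 (fun n u _ => n + u) rfl a₁ b₁ a₂ b₂
    · intro x y hxy hy0
      have m1 := p3 hxy hy0
      have m2 := q3 hxy hy0
      have d1 := hdp x; have d2 := hdp y
      have e1 := H1 x; have e2 := H1 y
      have b1 := ind_le_one a₂ b₂ x; have b2 := ind_le_one a₂ b₂ y
      show p x + ind a₂ b₂ x ≤ p y + ind a₂ b₂ y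
      omega
    · intro x y hx0 hxy
      have m1 := p4 hx0 hxy
      have m2 := q4 hx0 hxy
      have d1 := hdp x; have d2 := hdp y
      have e1 := H1 x; have e2 := H1 y
      have b1 := ind_le_one a₂ b₂ x; have b2 := ind_le_one a₂ b₂ y
      show p y + ind a₂ b₂ y ≤ p x + ind a₂ b₂ x
      omega
    · exact fun x => cwa_comb (hp.2.2.2.2.1 x) (fun n u _ => n + u) a₁ b₁ a₂ b₂
    · exact fin_comb hfin (fun n u _ => n + u) a₁ b₁ a₂ b₂
    · intro x
      have A := p7 x
      have B := q7 x
      have f1 := fact1 x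
      have e1 := H1 x; have e2 := H2 x
      have b1 := ind_le_one a₂ b₂ x; have b2 := jnd_le_one a₂ b₂ x
      show |((p x + ind a₂ b₂ x : ℕ) : ℤ) -
        ((Function.leftLim (fun y => p y + ind a₂ b₂ y) x : ℕ) : ℤ)| ≤ 1
      rw [leftLim_r hfin, abs_le]
      rw [abs_le] at A B
      omega
  · refine isRealPyramid_mk ?_ ?_ ?_ ?_ ?_ ?_
    · exact bdd_comb hp.1 (fun n _ v => n - v) rfl a₁ b₁ a₂ b₂
    · intro x y hxy hy0
      have m1 := p3 hxy hy0
      have m2 := q3 hxy hy0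
      have d1 := hdp x; have d2 := hdp y
      have e1 := H1 x; have e2 := H1 y
      have b1 := ind_le_one a₂ b₂ x; have b2 := ind_le_one a₂ b₂ y
      show p x - ind a₁ b₁ x ≤ p y - ind a₁ b₁ y
      omega
    · intro x y hx0 hxy
      have m1 := p4 hx0 hxy
      have m2 := q4 hx0 hxy
      have d1 := hdp x; have d2 := hdp y
      have e1 := H1 x; have e2 := H1 y
      have b1 := ind_le_one a₂ b₂ x; have b2 := ind_le_one a₂ b₂ y
      show p y - ind a₁ b₁ y ≤ p x - ind a₁ b₁ x
      omega
    · exact fun x => cwa_comb (hp.2.2.2.2.1 x) (fun n _ v => n - v) a₁ b₁ a₂ b₂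
    · exact fin_comb hfin (fun n _ v => n - v) a₁ b₁ a₂ b₂
    · intro x
      have A := p7 x
      have B := q7 x
      have f2 := fact2 x
      have e1 := H1 x; have e2 := H2 x
      have b1 := ind_le_one a₂ b₂ x; have b2 := jnd_le_one a₂ b₂ x
      show |((p x - ind a₁ b₁ x : ℕ) : ℤ) -
        ((Function.leftLim (fun y => p y - ind a₁ b₁ y) x : ℕ) : ℤ)| ≤ 1
      rw [leftLim_s hfin, abs_le]
      rw [abs_le] at A B
      omega

-- ## the adjacent case is impossible
lemma adj_impossible {p : ℝ → ℕ} {a₁ b₁ a₂ b₂ : ℝ} (h₁ : a₁ < b₁) (h₂ : a₂ < b₂)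
    (hadj : b₁ = a₂ ∨ b₂ = a₁)
    (hp : IsRealPyramid p) (hp1 : ∀ x ∈ Set.Ico a₁ b₁, 1 ≤ p x)
    (hq : IsRealPyramid fun x => (p x + ind a₂ b₂ x) - ind a₁ b₁ x) : False := by
  have hfin := hp.2.2.2.2.2.1
  have p7 := hp.2.2.2.2.2.2
  have q7 : ∀ x : ℝ, |(((p x + ind a₂ b₂ x) - ind a₁ b₁ x : ℕ) : ℤ) -
      (((Function.leftLim p x + jnd a₂ b₂ x) - jnd a₁ b₁ x : ℕ) : ℤ)| ≤ 1 := by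
    intro x
    have h := hq.2.2.2.2.2.2 x
    rwa [leftLim_q hfin] at h
  rcases hadj with h | h
  · -- b₁ = a₂
    have hia : ind a₂ b₂ b₁ = 1 := ind_eq_one h.ge (by rw [h]; exact h₂)
    have hib : ind a₁ b₁ b₁ = 0 := ind_eq_zero_right le_rfl
    have hja : jnd a₂ b₂ b₁ = 0 := jnd_eq_zero_left h.le
    have hjb : jnd a₁ b₁ b₁ = 1 := jnd_eq_one h₁ le_rfl
    have hL1 : 1 ≤ Function.leftLim p b₁ := one_le_leftLim hfin hp1 h₁ le_rfl
    have A := p7 b₁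
    have B := q7 b₁
    rw [hia, hib, hja, hjb] at B
    rw [abs_le] at A B
    rcases le_or_gt b₁ 0 with hc | hc
    · have C : Function.leftLim p b₁ ≤ p b₁ := leftLim_le_of_le_zero hp hc
      omega
    · have D : ((p b₁ + ind a₂ b₂ b₁) - ind a₁ b₁ b₁ : ℕ) ≤
          (Function.leftLim p b₁ + jnd a₂ b₂ b₁) - jnd a₁ b₁ b₁ := by
        have h' := le_leftLim_of_pos hq hc
        rwa [leftLim_q hfin] at h'
      rw [hia, hib, hja, hjb] at D
      omega
  · -- b₂ = a₁
    have hia : ind a₂ b₂ a₁ = 0 := ind_eq_zero_right h.le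
    have hib : ind a₁ b₁ a₁ = 1 := ind_eq_one le_rfl h₁
    have hja : jnd a₂ b₂ a₁ = 1 := jnd_eq_one (by rw [← h]; exact h₂) h.ge
    have hjb : jnd a₁ b₁ a₁ = 0 := jnd_eq_zero_left le_rfl
    have hone : 1 ≤ p a₁ := hp1 a₁ ⟨le_rfl, h₁⟩
    have A := p7 a₁
    have B := q7 a₁
    rw [hia, hib, hja, hjb] at B
    rw [abs_le] at A B
    rcases le_or_gt a₁ 0 with hc | hc
    · have C : ((Function.leftLim p a₁ + jnd a₂ b₂ a₁) - jnd a₁ b₁ a₁ : ℕ) ≤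
          (p a₁ + ind a₂ b₂ a₁) - ind a₁ b₁ a₁ := by
        have h' := leftLim_le_of_le_zero hq hc
        rwa [leftLim_q hfin] at h'
      rw [hia, hib, hja, hjb] at C
      omega
    · have C : p a₁ ≤ Function.leftLim p a₁ := le_leftLim_of_pos hp hc
      omega

-- ## equivalence of the two chains of conditions (strictly separated case)
lemma cond_equiv {p : ℝ → ℕ} {a₁ b₁ a₂ b₂ : ℝ} (h₁ : a₁ < b₁) (h₂ : a₂ < b₂)
    (hdisj : Set.Ico a₁ b₁ ∩ Set.Ico a₂ b₂ = ∅) (hsep : b₁ < a₂ ∨ b₂ < a₁)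
    (hp : IsRealPyramid p) :
    (Addable p a₂ b₂ ∧ Removable (fun x => p x + ind a₂ b₂ x) a₁ b₁) ↔
      (Removable p a₁ b₁ ∧ Addable (fun x => p x - ind a₁ b₁ x) a₂ b₂) := by
  constructor
  · rintro ⟨hA, hRr⟩
    have hp1 : ∀ x ∈ Set.Ico a₁ b₁, 1 ≤ p x := by
      intro x hx
      have h0 : 1 ≤ p x + ind a₂ b₂ x := hRr.1 x hx
      have h2 := ind_zero_on hdisj x hx
      omega
    have hq : IsRealPyramid fun x => (p x + ind a₂ b₂ x) - ind a₁ b₁ x := hRr.2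
    obtain ⟨-, hs⟩ := pyr_mid h₁ h₂ hdisj hsep hp hp1 hq
    refine ⟨⟨hp1, hs⟩, ?_⟩
    show IsRealPyramid fun x => (p x - ind a₁ b₁ x) + ind a₂ b₂ x
    rw [fun_swap hdisj]; exact hq
  · rintro ⟨hRp, hAs⟩
    have hq : IsRealPyramid fun x => (p x + ind a₂ b₂ x) - ind a₁ b₁ x := by
      have h' : IsRealPyramid fun x => (p x - ind a₁ b₁ x) + ind a₂ b₂ x := hAs
      rwa [fun_swap hdisj] at h'
    obtain ⟨hr, -⟩ := pyr_mid h₁ h₂ hdisj hsep hp hRp.1 hq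
    refine ⟨hr, ?_, hq⟩
    intro x hx
    have h0 := hRp.1 x hx
    have h2 := ind_zero_on hdisj x hx
    show 1 ≤ p x + ind a₂ b₂ x
    omega

-- ## Fock-space computation lemmas
lemma Evec_zero {a b : ℝ} {f : ℝ → ℕ} {hf : IsRealPyramid f}
    (h : ¬ Removable f a b) : Evec a b ⟨f, hf⟩ = 0 := dif_neg h

lemma Fvec_zero {a b : ℝ} {f : ℝ → ℕ} {hf : IsRealPyramid f}
    (h : ¬ Addable f a b) : Fvec a b ⟨f, hf⟩ = 0 := dif_neg h

lemma Evec_pos {a b : ℝ} {f : ℝ → ℕ} {hf : IsRealPyramid f} (h : Removable f a b) :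
    Evec a b ⟨f, hf⟩ = Finsupp.single ⟨fun x => f x - ind a b x, h.2⟩
      (-tK * (-vK) ^ ((f b : ℤ) - (f a : ℤ))) := dif_pos h

lemma Fvec_pos {a b : ℝ} {f : ℝ → ℕ} {hf : IsRealPyramid f} (h : Addable f a b) :
    Fvec a b ⟨f, hf⟩ = Finsupp.single ⟨fun x => f x + ind a b x, h⟩
      (tK * (-vK) ^ ((f a : ℤ) - (f b : ℤ))) := dif_pos h

lemma Eop_single (a b : ℝ) (x : Pyr) (c : K) :
    Eop a b (Finsupp.single x c) = c • Evec a b x := by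
  simp only [Eop, Finsupp.lsum_single, LinearMap.toSpanSingleton_apply]

lemma Fop_single (a b : ℝ) (x : Pyr) (c : K) :
    Fop a b (Finsupp.single x c) = c • Fvec a b x := by
  simp only [Fop, Finsupp.lsum_single, LinearMap.toSpanSingleton_apply]

-- ## the two cases of the commutation on basis vectors
set_option maxHeartbeats 1000000 in
lemma sep_case (a₁ b₁ a₂ b₂ : ℝ) (h₁ : a₁ < b₁) (h₂ : a₂ < b₂)
    (hdisj : Set.Ico a₁ b₁ ∩ Set.Ico a₂ b₂ = ∅) (hsep : b₁ < a₂ ∨ b₂ < a₁) (p : Pyr) :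
    Eop a₁ b₁ (Fvec a₂ b₂ p) = Fop a₂ b₂ (Evec a₁ b₁ p) := by
  obtain ⟨f, hf⟩ := p
  have hdp := ind_disj_point hdisj
  have hEq := cond_equiv h₁ h₂ hdisj hsep hf
  by_cases hA : Addable f a₂ b₂
  · by_cases hRr : Removable (fun x => f x + ind a₂ b₂ x) a₁ b₁
    · have hRp : Removable f a₁ b₁ := (hEq.mp ⟨hA, hRr⟩).1
      have hAs : Addable (fun x => f x - ind a₁ b₁ x) a₂ b₂ := (hEq.mp ⟨hA, hRr⟩).2
      rw [Fvec_pos hA]; erw [Eop_single]; rw [ Evec_pos (hf := hA) hRr, Evec_pos hRp]; erw [Fop_single]; rw [ Fvec_pos hAs]; erw [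
        Finsupp.smul_single, Finsupp.smul_single]
      refine congrArg₂ Finsupp.single (Subtype.ext (funext fun z => ?_)) ?_
      · show (f z + ind a₂ b₂ z) - ind a₁ b₁ z = (f z - ind a₁ b₁ z) + ind a₂ b₂ z
        have := hdp z
        omega
      · have e1 : ind a₂ b₂ b₁ = 0 := by
          rcases hsep with hs | hs
          exacts [ind_eq_zero_left hs, ind_eq_zero_right (by linarith)]
        have e2 : ind a₂ b₂ a₁ = 0 := by
          rcases hsep with hs | hs
          exacts [ind_eq_zero_left (by linarith), ind_eq_zero_right (by linarith)]
        have e3 : ind a₁ b₁ a₂ = 0 := by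
          rcases hsep with hs | hs
          exacts [ind_eq_zero_right hs.le, ind_eq_zero_left (by linarith)]
        have e4 : ind a₁ b₁ b₂ = 0 := by
          rcases hsep with hs | hs
          exacts [ind_eq_zero_right (by linarith), ind_eq_zero_left hs]
        simp only [smul_eq_mul]
        rw [e1, e2, e3, e4]
        simp only [add_zero, Nat.sub_zero]
        ring
    · rw [Fvec_pos hA]; erw [Eop_single]; rw [ Evec_zero (hf := hA) hRr, smul_zero]
      by_cases hRp : Removable f a₁ b₁
      · have hnA : ¬ Addable (fun x => f x - ind a₁ b₁ x) a₂ b₂ :=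
          fun hAs => hRr (hEq.mpr ⟨hRp, hAs⟩).2
        rw [Evec_pos hRp]; erw [Fop_single]; rw [ Fvec_zero hnA, smul_zero]
      · rw [Evec_zero hRp, map_zero]
  · rw [Fvec_zero hA, map_zero]
    by_cases hRp : Removable f a₁ b₁
    · have hnA : ¬ Addable (fun x => f x - ind a₁ b₁ x) a₂ b₂ :=
        fun hAs => hA (hEq.mpr ⟨hRp, hAs⟩).1
      rw [Evec_pos hRp]; erw [Fop_single]; rw [ Fvec_zero hnA, smul_zero]
    · rw [Evec_zero hRp, map_zero]

lemma adj_case (a₁ b₁ a₂ b₂ : ℝ) (h₁ : a₁ < b₁) (h₂ : a₂ < b₂)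
    (hdisj : Set.Ico a₁ b₁ ∩ Set.Ico a₂ b₂ = ∅) (hadj : b₁ = a₂ ∨ b₂ = a₁) (p : Pyr) :
    Eop a₁ b₁ (Fvec a₂ b₂ p) = Fop a₂ b₂ (Evec a₁ b₁ p) := by
  obtain ⟨f, hf⟩ := p
  have hL : Eop a₁ b₁ (Fvec a₂ b₂ ⟨f, hf⟩) = 0 := by
    by_cases hA : Addable f a₂ b₂
    · have hnR : ¬ Removable (fun x => f x + ind a₂ b₂ x) a₁ b₁ := by
        intro hrem
        have hp1 : ∀ x ∈ Set.Ico a₁ b₁, 1 ≤ f x := by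
          intro x hx
          have h0 : 1 ≤ f x + ind a₂ b₂ x := hrem.1 x hx
          have h2 := ind_zero_on hdisj x hx
          omega
        exact adj_impossible h₁ h₂ hadj hf hp1 hrem.2
      rw [Fvec_pos hA]; erw [Eop_single]; rw [ Evec_zero (hf := hA) hnR, smul_zero]
    · rw [Fvec_zero hA, map_zero]
  have hR : Fop a₂ b₂ (Evec a₁ b₁ ⟨f, hf⟩) = 0 := by
    by_cases hRp : Removable f a₁ b₁
    · have hnA : ¬ Addable (fun x => f x - ind a₁ b₁ x) a₂ b₂ := by
        intro hAs
        have hq : IsRealPyramid fun x => (f x + ind a₂ b₂ x) - ind a₁ b₁ x := by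
          have h' : IsRealPyramid fun x => (f x - ind a₁ b₁ x) + ind a₂ b₂ x := hAs
          rwa [fun_swap hdisj] at h'
        exact adj_impossible h₁ h₂ hadj hf hRp.1 hq
      rw [Evec_pos hRp]; erw [Fop_single]; rw [ Fvec_zero hnA, smul_zero]
    · rw [Evec_zero hRp, map_zero]
  rw [hL, hR]

lemma key_commute (a₁ b₁ a₂ b₂ : ℝ) (h₁ : a₁ < b₁) (h₂ : a₂ < b₂)
    (hdisj : Set.Ico a₁ b₁ ∩ Set.Ico a₂ b₂ = ∅) (p : Pyr) :
    Eop a₁ b₁ (Fvec a₂ b₂ p) = Fop a₂ b₂ (Evec a₁ b₁ p) := by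
  have hsep' : b₁ ≤ a₂ ∨ b₂ ≤ a₁ := by
    by_contra hcon
    push_neg at hcon
    have hmem : max a₁ a₂ ∈ Set.Ico a₁ b₁ ∩ Set.Ico a₂ b₂ :=
      ⟨⟨le_max_left _ _, max_lt h₁ hcon.1⟩, ⟨le_max_right _ _, max_lt hcon.2 h₂⟩⟩
    rw [hdisj] at hmem
    exact hmem
  rcases hsep' with hs | hs
  · rcases lt_or_eq_of_le hs with hlt | heq
    · exact sep_case a₁ b₁ a₂ b₂ h₁ h₂ hdisj (Or.inl hlt) p
    · exact adj_case a₁ b₁ a₂ b₂ h₁ h₂ hdisj (Or.inl heq) p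
  · rcases lt_or_eq_of_le hs with hlt | heq
    · exact sep_case a₁ b₁ a₂ b₂ h₁ h₂ hdisj (Or.inr hlt) p
    · exact adj_case a₁ b₁ a₂ b₂ h₁ h₂ hdisj (Or.inr heq) p


/-- if `J₁ ∩ J₂ = ∅` then `E_{J₁}` and `F_{J₂}` commute on the Fock space. -/
theorem fock_EF_disjoint_commute (a₁ b₁ a₂ b₂ : ℝ) (h₁ : a₁ < b₁) (h₂ : a₂ < b₂)
    (hdisj : Set.Ico a₁ b₁ ∩ Set.Ico a₂ b₂ = ∅) :
    Eop a₁ b₁ ∘ₗ Fop a₂ b₂ = Fop a₂ b₂ ∘ₗ Eop a₁ b₁ := by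
  apply Finsupp.lhom_ext
  intro q c
  simp only [LinearMap.comp_apply]
  rw [Fop_single, map_smul, Eop_single, map_smul,
    key_commute a₁ b₁ a₂ b₂ h₁ h₂ hdisj q]
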